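/- The set of (p,q,r,s) ∈ ℝ⁴ satisfying p + 2q = r + 2s, p + 2q + 2p² − pq + q² = r + 2s + 2r² − rs + s², p² + q² = 1, r² + s² = 1 and (p,q) ≠ (r,s) is exactly { (−2/√5, 1/√5, 2/√5, −1/√5), (2/√5, −1/√5, −2/√5, 1/√5) }. Moreover, with X(x,y) = (2,−1) and Y(x,y) = (2 − x + 2y, −1 − 4x + y), both points (−2/√5, 1/√5) and (2/√5, −1/√5) satisfy the crossing condition ⟨X(u), u⟩ · ⟨Y(u), u⟩ > 0. -/

import Mathlib

/-- The closing-equation system for `X = (2,-1)`, `Y = (2 - x + 2y, -1 - 4x + y)`. -/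
def closingSys6 (p q r s : ℝ) : Prop :=
  p + 2 * q = r + 2 * s ∧
    p + 2 * q + 2 * p ^ 2 - p * q + q ^ 2 = r + 2 * s + 2 * r ^ 2 - r * s + s ^ 2 ∧
    p ^ 2 + q ^ 2 = 1 ∧ r ^ 2 + s ^ 2 = 1 ∧ (p, q) ≠ (r, s)

/-- The inner vector field `X(x,y) = (2, -1)`. -/
def X6 (_ : ℝ × ℝ) : ℝ × ℝ := (2, -1)

/-- The outer vector field `Y(x,y) = (2 - x + 2y, -1 - 4x + y)`. -/
def Y6 (u : ℝ × ℝ) : ℝ × ℝ := (2 - u.1 + 2 * u.2, -1 - 4 * u.1 + u.2)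

/-- The dot product `⟨X(u), u⟩ ⬝ ⟨Y(u), u⟩` crossing condition at `u`. -/
def crossing6 (u : ℝ × ℝ) : Prop :=
  ((X6 u).1 * u.1 + (X6 u).2 * u.2) * ((Y6 u).1 * u.1 + (Y6 u).2 * u.2) > 0

lemma sqrt5_pos : (0:ℝ) < Real.sqrt 5 := Real.sqrt_pos.mpr (by norm_num)

lemma sqrt5_sq : (Real.sqrt 5) ^ 2 = 5 := Real.sq_sqrt (by norm_num)

/-- The solution set of the closing equations is exactly the two listed points, and both
unit-circle intersection points satisfy the crossing condition. -/
theorem closingSys6_solutions_and_crossing :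
    {x : ℝ × ℝ × ℝ × ℝ | closingSys6 x.1 x.2.1 x.2.2.1 x.2.2.2} =
      {(-2 / Real.sqrt 5, 1 / Real.sqrt 5, 2 / Real.sqrt 5, -1 / Real.sqrt 5),
       (2 / Real.sqrt 5, -1 / Real.sqrt 5, -2 / Real.sqrt 5, 1 / Real.sqrt 5)} ∧
    crossing6 (-2 / Real.sqrt 5, 1 / Real.sqrt 5) ∧
    crossing6 (2 / Real.sqrt 5, -1 / Real.sqrt 5) := by
  have ht : (0:ℝ) < Real.sqrt 5 := sqrt5_pos
  have ht2 : (Real.sqrt 5) ^ 2 = 5 := sqrt5_sq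
  have htne : Real.sqrt 5 ≠ 0 := ne_of_gt ht
  have hinv : (1 / Real.sqrt 5) ^ 2 = 1 / 5 := by rw [div_pow, one_pow, ht2]
  refine ⟨?_, ?_, ?_⟩
  · ext ⟨p, q, r, s⟩
    simp only [Set.mem_setOf_eq, Set.mem_insert_iff, Set.mem_singleton_iff, closingSys6,
      Prod.mk.injEq]
    constructor
    · rintro ⟨e1, e2, e3, e4, ne⟩
      have hqs : q ≠ s := by
        intro h
        subst h
        have hp : p = r := by linarith
        rw [hp] at ne
        exact ne rfl
      have h1 : (q - s) * (5 * q - 3 * s - 4 * r) = 0 := by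
        linear_combination e3 - e4 - (p + r + 2 * s - 2 * q) * e1
      have h2 : (q - s) * (6 * q - 4 * s - 5 * r) = 0 := by
        linear_combination e2 - e1 - e3 + e4 - (p + r + 2 * s - 3 * q) * e1
      have hu : q - s ≠ 0 := sub_ne_zero.mpr hqs
      have h1' : 5 * q - 3 * s - 4 * r = 0 := by
        rcases mul_eq_zero.mp h1 with h | h
        · exact absurd h hu
        · exact h
      have h2' : 6 * q - 4 * s - 5 * r = 0 := by
        rcases mul_eq_zero.mp h2 with h | h
        · exact absurd h hu
        · exact h
      have hq : q = -s := by linarith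
      have hr : r = -2 * s := by linarith
      have hp : p = 2 * s := by linarith
      have hs2 : s ^ 2 = 1 / 5 := by nlinarith [e4]
      have hzero : (s - 1 / Real.sqrt 5) * (s + 1 / Real.sqrt 5) = 0 := by
        linear_combination hs2 - hinv
      rcases mul_eq_zero.mp hzero with h | h
      · -- s = 1/√5
        have hs : s = 1 / Real.sqrt 5 := sub_eq_zero.mp h
        right
        exact ⟨by rw [hp, hs]; ring, by rw [hq, hs]; ring, by rw [hr, hs]; ring, hs⟩
      · -- s = -1/√5
        have hs : s = -1 / Real.sqrt 5 := by
          have := eq_neg_of_add_eq_zero_left h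
          rw [this]; ring
        left
        exact ⟨by rw [hp, hs]; ring, by rw [hq, hs]; ring, by rw [hr, hs]; ring, hs⟩
    · have hne1 : ((-2 : ℝ) / Real.sqrt 5, (1:ℝ) / Real.sqrt 5) ≠
          ((2 : ℝ) / Real.sqrt 5, (-1:ℝ) / Real.sqrt 5) := by
        intro h
        have h1 : (-2 : ℝ) / Real.sqrt 5 = 2 / Real.sqrt 5 := congrArg Prod.fst h
        rw [div_eq_div_iff htne htne] at h1
        nlinarith [ht]
      have hne2 : ((2 : ℝ) / Real.sqrt 5, (-1:ℝ) / Real.sqrt 5) ≠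
          ((-2 : ℝ) / Real.sqrt 5, (1:ℝ) / Real.sqrt 5) := fun h => hne1 h.symm
      rintro (⟨hp, hq, hr, hs⟩ | ⟨hp, hq, hr, hs⟩) <;>
        subst hp <;> subst hq <;> subst hr <;> subst hs
      · exact ⟨by ring, by field_simp; ring, by field_simp; linarith [ht2],
          by field_simp; linarith [ht2], hne1⟩
      · exact ⟨by ring, by field_simp; ring, by field_simp; linarith [ht2],
          by field_simp; linarith [ht2], hne2⟩
  · show ((2:ℝ) * (-2 / Real.sqrt 5) + (-1) * (1 / Real.sqrt 5)) *
      ((2 - (-2 / Real.sqrt 5) + 2 * (1 / Real.sqrt 5)) * (-2 / Real.sqrt 5) +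
        (-1 - 4 * (-2 / Real.sqrt 5) + 1 / Real.sqrt 5) * (1 / Real.sqrt 5)) > 0
    have h5 : Real.sqrt 5 < 5 := by nlinarith [ht2, ht]
    rw [gt_iff_lt]
    field_simp
    nlinarith [ht2, ht, h5]
  · show ((2:ℝ) * (2 / Real.sqrt 5) + (-1) * (-1 / Real.sqrt 5)) *
      ((2 - 2 / Real.sqrt 5 + 2 * (-1 / Real.sqrt 5)) * (2 / Real.sqrt 5) +
        (-1 - 4 * (2 / Real.sqrt 5) + -1 / Real.sqrt 5) * (-1 / Real.sqrt 5)) > 0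
    rw [gt_iff_lt]
    field_simp
    nlinarith [ht2, ht]
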